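/- Suppose F, G ∈ ℚ̄[x,y] are homogeneous with deg G = deg F + 2, and the map with coordinates (xF/2 + G_y, yF/2 − G_x) has both coordinates in ℚ[x,y]. If F has a monomial c·x^n y^m with coefficient c, then comparing coefficients forces c ∈ ℚ, and more strongly if c ∉ ℚ then c = 0; hence both F and G are defined over ℚ. -/

import Mathlib

open MvPolynomial

lemma coeff_pderiv' {σ R : Type*} [DecidableEq σ] [CommSemiring R] (i : σ)
    (p : MvPolynomial σ R) (m : σ →₀ ℕ) :
    (pderiv i p).coeff m = (m i + 1) * p.coeff (m + Finsupp.single i 1) := by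
  induction p using MvPolynomial.induction_on' with
  | monomial s a =>
    rw [pderiv_monomial, coeff_monomial, coeff_monomial]
    split_ifs with h1 h2 h2
    · subst h2
      simp [add_tsub_cancel_right] at h1 ⊢
      ring
    · rcases Nat.eq_zero_or_pos (s i) with h0 | h0
      · simp [h0]
      · exfalso
        apply h2
        have hle : Finsupp.single i 1 ≤ s := by
          simpa [Finsupp.single_le_iff, Nat.one_le_iff_ne_zero] using Nat.pos_iff_ne_zero.1 h0
        rw [← h1, tsub_add_cancel_of_le hle]
    · exfalso; apply h1; rw [h2, add_tsub_cancel_right]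
    · ring
  | add p q hp hq =>
    simp [hp, hq]
    ring

theorem doyle_mcmullen_rationality {K : Type*} [Field K] [CharZero K] (dF : ℕ)
    (F G : MvPolynomial (Fin 2) K)
    (hF : F.IsHomogeneous dF) (hG : G.IsHomogeneous (dF + 2))
    (hP : ∀ m, (C (1 / 2 : K) * X 0 * F + pderiv 1 G).coeff m ∈
      Set.range ((↑) : ℚ → K))
    (hQ : ∀ m, (C (1 / 2 : K) * X 1 * F - pderiv 0 G).coeff m ∈
      Set.range ((↑) : ℚ → K)) :
    (∀ m, F.coeff m ∈ Set.range ((↑) : ℚ → K)) ∧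
    (∀ m, G.coeff m ∈ Set.range ((↑) : ℚ → K)) := by
  classical
  -- coefficient formulas for the two coordinates
  have eP : ∀ m : Fin 2 →₀ ℕ,
      (C (1 / 2 : K) * X 0 * F + pderiv 1 G).coeff m
        = (1 / 2 : K) * (X (0 : Fin 2) * F).coeff m
          + ((m 1 : K) + 1) * G.coeff (m + Finsupp.single 1 1) := by
    intro m
    rw [coeff_add, mul_assoc, coeff_C_mul, coeff_pderiv']
  have eQ : ∀ m : Fin 2 →₀ ℕ,
      (C (1 / 2 : K) * X 1 * F - pderiv 0 G).coeff m
        = (1 / 2 : K) * (X (1 : Fin 2) * F).coeff m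
          - ((m 0 : K) + 1) * G.coeff (m + Finsupp.single 0 1) := by
    intro m
    rw [coeff_sub, mul_assoc, coeff_C_mul, coeff_pderiv']
  -- rationality of F
  have hFrat : ∀ m : Fin 2 →₀ ℕ, F.coeff m ∈ Set.range ((↑) : ℚ → K) := by
    intro m
    obtain ⟨q1, hq1⟩ := hP (m + Finsupp.single 0 1)
    obtain ⟨q2, hq2⟩ := hQ (m + Finsupp.single 1 1)
    rw [eP] at hq1
    rw [eQ] at hq2
    have hx0 : (X (0 : Fin 2) * F).coeff (m + Finsupp.single 0 1) = F.coeff m := by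
      rw [add_comm, coeff_X_mul]
    have hx1 : (X (1 : Fin 2) * F).coeff (m + Finsupp.single 1 1) = F.coeff m := by
      rw [add_comm, coeff_X_mul]
    rw [hx0] at hq1
    rw [hx1] at hq2
    have hm1 : ((m + Finsupp.single 0 1) : Fin 2 →₀ ℕ) 1 = m 1 := by
      simp [Finsupp.single_apply]
    have hm0 : ((m + Finsupp.single 1 1) : Fin 2 →₀ ℕ) 0 = m 0 := by
      simp [Finsupp.single_apply]
    rw [hm1] at hq1
    rw [hm0] at hq2
    have hidx : m + Finsupp.single 1 1 + Finsupp.single 0 1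
        = m + Finsupp.single 0 1 + Finsupp.single 1 1 := by
      rw [add_assoc, add_assoc, add_comm (Finsupp.single 1 1)]
    rw [hidx] at hq2
    refine ⟨(2 * (((m 0 : ℚ) + 1) * q1 + ((m 1 : ℚ) + 1) * q2)) / ((m 0 : ℚ) + (m 1 : ℚ) + 2), ?_⟩
    have hdK : ((m 0 : K) + (m 1 : K) + 2) ≠ 0 := by
      have : (((m 0 + m 1 + 2 : ℕ)) : K) ≠ 0 := Nat.cast_ne_zero.2 (by omega)
      push_cast at this
      exact this
    push_cast
    rw [div_eq_iff hdK]
    linear_combination (2 * ((m 0 : K) + 1)) * hq1 + (2 * ((m 1 : K) + 1)) * hq2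
  refine ⟨hFrat, ?_⟩
  -- rationality of G
  have hXF : ∀ (i : Fin 2) (m : Fin 2 →₀ ℕ),
      (X i * F).coeff m ∈ Set.range ((↑) : ℚ → K) := by
    intro i m
    rw [coeff_X_mul']
    split_ifs
    · exact hFrat _
    · exact ⟨0, by simp⟩
  intro m
  by_cases h1 : m 1 = 0
  · by_cases h0 : m 0 = 0
    · have hm : m = 0 := by
        ext i
        fin_cases i <;> simpa using ‹_›
      rw [hm]
      refine ⟨0, ?_⟩
      rw [hG.coeff_eq_zero (by simp)]
      simp
    · -- use hQ at m - single 0 1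
      obtain ⟨q, hq⟩ := hQ (m - Finsupp.single 0 1)
      obtain ⟨r, hr⟩ := hXF 1 (m - Finsupp.single 0 1)
      rw [eQ] at hq
      have hle : Finsupp.single (0 : Fin 2) 1 ≤ m := by
        simpa [Finsupp.single_le_iff] using Nat.one_le_iff_ne_zero.2 h0
      have hcan : m - Finsupp.single 0 1 + Finsupp.single 0 1 = m :=
        tsub_add_cancel_of_le hle
      rw [hcan, ← hr] at hq
      have hsub : ((m - Finsupp.single 0 1) : Fin 2 →₀ ℕ) 0 = m 0 - 1 := by
        simp [Finsupp.tsub_apply, Finsupp.single_apply]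
      rw [hsub] at hq
      have hm0' : ((m 0 - 1 : ℕ) : K) + 1 = (m 0 : K) := by
        have h := Nat.succ_pred_eq_of_pos (Nat.pos_of_ne_zero h0)
        rw [← h]
        push_cast
        ring
      rw [hm0'] at hq
      have hmK : (m 0 : K) ≠ 0 := Nat.cast_ne_zero.2 h0
      refine ⟨(r / 2 - q) / (m 0 : ℚ), ?_⟩
      push_cast
      rw [div_eq_iff hmK]
      linear_combination -hq
  · -- use hP at m - single 1 1
    obtain ⟨q, hq⟩ := hP (m - Finsupp.single 1 1)
    obtain ⟨r, hr⟩ := hXF 0 (m - Finsupp.single 1 1)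
    rw [eP] at hq
    have hle : Finsupp.single (1 : Fin 2) 1 ≤ m := by
      simpa [Finsupp.single_le_iff] using Nat.one_le_iff_ne_zero.2 h1
    have hcan : m - Finsupp.single 1 1 + Finsupp.single 1 1 = m :=
      tsub_add_cancel_of_le hle
    rw [hcan, ← hr] at hq
    have hsub : ((m - Finsupp.single 1 1) : Fin 2 →₀ ℕ) 1 = m 1 - 1 := by
      simp [Finsupp.tsub_apply, Finsupp.single_apply]
    rw [hsub] at hq
    have hm1' : ((m 1 - 1 : ℕ) : K) + 1 = (m 1 : K) := by
      have h := Nat.succ_pred_eq_of_pos (Nat.pos_of_ne_zero h1)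
      rw [← h]
      push_cast
      ring
    rw [hm1'] at hq
    have hmK : (m 1 : K) ≠ 0 := Nat.cast_ne_zero.2 h1
    refine ⟨(q - r / 2) / (m 1 : ℚ), ?_⟩
    push_cast
    rw [div_eq_iff hmK]
    linear_combination hq
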